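/- Let n ≥ 5 and let π ∈ Equiv.Perm (Fin n) be an odd permutation (Equiv.Perm.sign π = −1, which is equivalent to the normal closure of {π} being all of S_n). Then the conjugation action of Equiv.Perm (Fin n) on the conjugacy class of π is primitive if and only if π is a transposition, or n ≡ 2 (mod 4) and π is a fixed-point-free involution. -/

import Mathlib

open Equiv

section AuxLemmas

variable {α : Type*} [DecidableEq α]

/-- There is a permutation sending two given distinct points to two given distinct points. -/
lemma aux_exists_perm_two {a b p q : α} (hab : a ≠ b) (hpq : p ≠ q) :
    ∃ f : Equiv.Perm α, f a = p ∧ f b = q := by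
  have hb1p : Equiv.swap a p b ≠ p := by
    intro h
    have : Equiv.swap a p b = Equiv.swap a p a := by rw [h, Equiv.swap_apply_left]
    exact hab ((Equiv.swap a p).injective this).symm
  refine ⟨Equiv.swap (Equiv.swap a p b) q * Equiv.swap a p, ?_, ?_⟩
  · simp only [Equiv.Perm.mul_apply, Equiv.swap_apply_left]
    exact Equiv.swap_apply_of_ne_of_ne (Ne.symm hb1p) hpq
  · simp only [Equiv.Perm.mul_apply, Equiv.swap_apply_left]

/-- There is a permutation sending three given distinct points to three given distinct points. -/
lemma aux_exists_perm_three {a b c p q s : α} (hab : a ≠ b) (hac : a ≠ c) (hbc : b ≠ c)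
    (hpq : p ≠ q) (hps : p ≠ s) (hqs : q ≠ s) :
    ∃ f : Equiv.Perm α, f a = p ∧ f b = q ∧ f c = s := by
  have hb1p : Equiv.swap a p b ≠ p := by
    intro h
    have : Equiv.swap a p b = Equiv.swap a p a := by rw [h, Equiv.swap_apply_left]
    exact hab ((Equiv.swap a p).injective this).symm
  have hc1p : Equiv.swap a p c ≠ p := by
    intro h
    have : Equiv.swap a p c = Equiv.swap a p a := by rw [h, Equiv.swap_apply_left]
    exact hac ((Equiv.swap a p).injective this).symm
  have hb1c1 : Equiv.swap a p b ≠ Equiv.swap a p c :=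
    fun h => hbc ((Equiv.swap a p).injective h)
  have hg2p : Equiv.swap (Equiv.swap a p b) q p = p :=
    Equiv.swap_apply_of_ne_of_ne (Ne.symm hb1p) hpq
  have hc2p : Equiv.swap (Equiv.swap a p b) q (Equiv.swap a p c) ≠ p := by
    intro h
    exact hc1p ((Equiv.swap (Equiv.swap a p b) q).injective (h.trans hg2p.symm))
  have hc2q : Equiv.swap (Equiv.swap a p b) q (Equiv.swap a p c) ≠ q := by
    intro h
    have : Equiv.swap (Equiv.swap a p b) q (Equiv.swap a p c)
        = Equiv.swap (Equiv.swap a p b) q (Equiv.swap a p b) := by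
      rw [h, Equiv.swap_apply_left]
    exact hb1c1 ((Equiv.swap (Equiv.swap a p b) q).injective this).symm
  refine ⟨Equiv.swap (Equiv.swap (Equiv.swap a p b) q (Equiv.swap a p c)) s *
      (Equiv.swap (Equiv.swap a p b) q * Equiv.swap a p), ?_, ?_, ?_⟩
  · simp only [Equiv.Perm.mul_apply, Equiv.swap_apply_left]
    rw [hg2p]
    exact Equiv.swap_apply_of_ne_of_ne (Ne.symm hc2p) hps
  · simp only [Equiv.Perm.mul_apply, Equiv.swap_apply_left]
    exact Equiv.swap_apply_of_ne_of_ne (Ne.symm hc2q) hqs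
  · simp only [Equiv.Perm.mul_apply, Equiv.swap_apply_left]

lemma aux_exists_notin {n : ℕ} (s : Finset (Fin n)) (h : s.card < n) : ∃ x, x ∉ s := by
  by_contra hc
  push_neg at hc
  have : s = Finset.univ := Finset.eq_univ_iff_forall.mpr hc
  rw [this, Finset.card_univ, Fintype.card_fin] at h
  omega

/-- A "shear" permutation of `Fin k × Bool`. -/
lemma aux_flip_perm {k : ℕ} (fp : Equiv.Perm (Fin k)) (cf : Fin k → Bool) :
    ∃ h : Equiv.Perm (Fin k × Bool), ∀ z, h z = (fp z.1, xor z.2 (cf z.1)) := by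
  refine ⟨⟨fun z => (fp z.1, xor z.2 (cf z.1)),
          fun z => (fp.symm z.1, xor z.2 (cf (fp.symm z.1))), ?_, ?_⟩, fun z => rfl⟩
  · rintro ⟨z1, z2⟩
    simp only [Equiv.symm_apply_apply]
    refine Prod.ext rfl ?_
    show xor (xor z2 (cf z1)) (cf z1) = z2
    cases z2 <;> cases hc : cf z1 <;> rfl
  · rintro ⟨z1, z2⟩
    simp only [Equiv.apply_symm_apply]
    refine Prod.ext rfl ?_
    show xor (xor z2 (cf (fp.symm z1))) (cf (fp.symm z1)) = z2
    cases z2 <;> cases hc : cf (fp.symm z1) <;> rfl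

/-- Structure theorem for fixed-point-free involutions: they are isomorphic to the
standard "flip" on `Fin k × Bool`. -/
lemma aux_structure {β : Type*} [Fintype β] [DecidableEq β] (σ : Equiv.Perm β)
    (h2 : ∀ x, σ (σ x) = x) (hf : ∀ x, σ x ≠ x) :
    ∃ (k : ℕ) (e : β ≃ Fin k × Bool), ∀ a, e (σ a) = ((e a).1, !(e a).2) := by
  classical
  letI s : Setoid β :=
    { r := fun x y => y = x ∨ y = σ x
      iseqv := by
        refine ⟨fun x => Or.inl rfl, ?_, ?_⟩
        · rintro x y (h | h)
          · exact Or.inl h.symm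
          · right; rw [h, h2]
        · rintro x y z (h1 | h1) (h2' | h2')
          · exact Or.inl (h2'.trans h1)
          · right; rw [h2', h1]
          · exact Or.inr (h2'.trans h1)
          · left; rw [h2', h1, h2] }
  have key : ∀ a : β, (Quotient.mk s a).out = a ∨ (Quotient.mk s a).out = σ a := by
    intro a
    have h : s ((Quotient.mk s a).out) a := Quotient.mk_out a
    set o := (Quotient.mk s a).out with ho
    have h' : a = o ∨ a = σ o := h
    rcases h' with h' | h'
    · exact Or.inl h'.symm
    · right
      have : σ a = o := by rw [h', h2]
      exact this.symm
  let f : β → Quotient s × Bool :=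
    fun a => (Quotient.mk s a, if a = (Quotient.mk s a).out then true else false)
  let g : Quotient s × Bool → β := fun x => if x.2 then x.1.out else σ x.1.out
  have hmk : ∀ a : β, Quotient.mk s (σ a) = Quotient.mk s a := by
    intro a
    exact (Quotient.sound (Or.inr rfl)).symm
  have hleft : ∀ a, g (f a) = a := by
    intro a
    rcases key a with h | h
    · have hcond : a = (Quotient.mk s a).out := h.symm
      show (if (if a = (Quotient.mk s a).out then true else false) = true
        then (Quotient.mk s a).out else σ (Quotient.mk s a).out) = a
      rw [if_pos hcond]
      simpa using h
    · have hcond : ¬ (a = (Quotient.mk s a).out) := by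
        intro hc
        rw [h] at hc
        exact hf a hc.symm
      show (if (if a = (Quotient.mk s a).out then true else false) = true
        then (Quotient.mk s a).out else σ (Quotient.mk s a).out) = a
      rw [if_neg hcond]
      simp only [Bool.false_eq_true, if_false]
      rw [h, h2]
  have hright : ∀ x, f (g x) = x := by
    rintro ⟨q, b⟩
    cases b
    · -- b = false, g = σ q.out
      have hmk2 : Quotient.mk s (σ q.out) = q := by rw [hmk, Quotient.out_eq]
      show (Quotient.mk s (σ q.out),
        if σ q.out = (Quotient.mk s (σ q.out)).out then true else false) = (q, false)
      refine Prod.ext hmk2 ?_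
      show (if σ q.out = (Quotient.mk s (σ q.out)).out then true else false) = false
      rw [hmk2]
      exact if_neg (hf q.out)
    · -- b = true, g = q.out
      show (Quotient.mk s q.out,
        if q.out = (Quotient.mk s q.out).out then true else false) = (q, true)
      refine Prod.ext (Quotient.out_eq q) ?_
      show (if q.out = (Quotient.mk s q.out).out then true else false) = true
      rw [Quotient.out_eq]
      exact if_pos rfl
  have hequiv : ∀ a, f (σ a) = ((f a).1, !(f a).2) := by
    intro a
    refine Prod.ext (hmk a) ?_
    show (if σ a = (Quotient.mk s (σ a)).out then true else false)
      = !(if a = (Quotient.mk s a).out then true else false)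
    rw [hmk a]
    rcases key a with h | h
    · rw [if_neg, if_pos h.symm]
      · rfl
      · rw [h]; exact hf a
    · rw [if_pos h.symm, if_neg]
      · rfl
      · rw [h]
        intro hc
        exact hf a hc.symm
  let e0 : β ≃ Quotient s × Bool := ⟨f, g, hleft, hright⟩
  obtain ⟨eqv⟩ := Fintype.truncEquivFin (Quotient s)
  refine ⟨Fintype.card (Quotient s),
    e0.trans (Equiv.prodCongr eqv (Equiv.refl Bool)), ?_⟩
  intro a
  have h : e0 (σ a) = ((e0 a).1, !(e0 a).2) := hequiv a
  show Equiv.prodCongr eqv (Equiv.refl Bool) (e0 (σ a)) = _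
  rw [h]
  rfl

/-- Conjugating one fixed-point-free involution into another, with two prescribed values
on points lying in distinct 2-cycles. -/
lemma aux_conj {n : ℕ} {σ τ : Equiv.Perm (Fin n)}
    (hσ2 : ∀ x, σ (σ x) = x) (hσf : ∀ x, σ x ≠ x)
    (hτ2 : ∀ x, τ (τ x) = x) (hτf : ∀ x, τ x ≠ x)
    {a b p q : Fin n} (hba : b ≠ a) (hbσ : b ≠ σ a) (hqp : q ≠ p) (hqτ : q ≠ τ p) :
    ∃ g : Equiv.Perm (Fin n), (∀ x, g (σ x) = τ (g x)) ∧ g a = p ∧ g b = q := by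
  classical
  obtain ⟨k1, e1, he1⟩ := aux_structure σ hσ2 hσf
  obtain ⟨k2, e2, he2⟩ := aux_structure τ hτ2 hτf
  have hk : k1 = k2 := by
    have h := Fintype.card_congr (e1.symm.trans e2)
    simp only [Fintype.card_prod, Fintype.card_fin, Fintype.card_bool] at h
    omega
  subst hk
  have hfst : ∀ (e : Fin n ≃ Fin k1 × Bool) (ρ : Equiv.Perm (Fin n)),
      (∀ x, e (ρ x) = ((e x).1, !(e x).2)) →
      ∀ x y : Fin n, y ≠ x → y ≠ ρ x → (e y).1 ≠ (e x).1 := by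
    intro e ρ he x y hyx hyρ hc
    have hb2 : (e y).2 = (e x).2 ∨ (e y).2 = !(e x).2 := by
      cases hh : (e y).2 <;> cases hh2 : (e x).2 <;> simp
    rcases hb2 with hb2 | hb2
    · exact hyx (e.injective (Prod.ext hc hb2))
    · exact hyρ (e.injective (by rw [he x]; exact Prod.ext hc hb2))
  have h1 := hfst e1 σ he1 a b hba hbσ
  have h2 := hfst e2 τ he2 p q hqp hqτ
  obtain ⟨fp, hfp1, hfp2⟩ := aux_exists_perm_two (Ne.symm h1) (Ne.symm h2)
  set cf : Fin k1 → Bool := fun x =>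
    if x = (e1 a).1 then xor (e1 a).2 (e2 p).2
    else if x = (e1 b).1 then xor (e1 b).2 (e2 q).2 else false with hcf
  obtain ⟨h, hhap⟩ := aux_flip_perm fp cf
  have hflip : ∀ z : Fin k1 × Bool, h (z.1, !z.2) = ((h z).1, !(h z).2) := by
    intro z
    rw [hhap, hhap]
    refine Prod.ext rfl ?_
    show xor (!z.2) (cf z.1) = !(xor z.2 (cf z.1))
    cases z.2 <;> cases hc : cf z.1 <;> rfl
  refine ⟨e1.trans (h.trans e2.symm), ?_, ?_, ?_⟩
  · intro x
    show e2.symm (h (e1 (σ x))) = τ (e2.symm (h (e1 x)))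
    rw [he1 x]
    have hzz : e1 x = ((e1 x).1, (e1 x).2) := rfl
    rw [show ((e1 x).1, !(e1 x).2) = (((e1 x).1, (e1 x).2).1, !((e1 x).1, (e1 x).2).2) from rfl,
      ← hzz, hflip (e1 x)]
    apply e2.injective
    rw [Equiv.apply_symm_apply, he2, Equiv.apply_symm_apply]
  · show e2.symm (h (e1 a)) = p
    have hh : h (e1 a) = e2 p := by
      rw [hhap]
      refine Prod.ext hfp1 ?_
      show xor (e1 a).2 (cf (e1 a).1) = (e2 p).2
      have hcfa : cf (e1 a).1 = xor (e1 a).2 (e2 p).2 := by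
        rw [hcf]
        simp
      rw [hcfa]
      cases hu : (e1 a).2 <;> cases hv : (e2 p).2 <;> rfl
    rw [hh, Equiv.symm_apply_apply]
  · show e2.symm (h (e1 b)) = q
    have hh : h (e1 b) = e2 q := by
      rw [hhap]
      refine Prod.ext hfp2 ?_
      show xor (e1 b).2 (cf (e1 b).1) = (e2 q).2
      have hcfb : cf (e1 b).1 = xor (e1 b).2 (e2 q).2 := by
        rw [hcf]
        simp [h1]
      rw [hcfb]
      cases hu : (e1 b).2 <;> cases hv : (e2 q).2 <;> rfl
    rw [hh, Equiv.symm_apply_apply]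

/-- Conjugating a fixed-point-free involution by the swap of one of its 2-cycles
fixes it. -/
lemma aux_swap_edge {β : Type*} [DecidableEq β] (σ : Equiv.Perm β)
    (h2 : ∀ x, σ (σ x) = x) (a : β) :
    Equiv.swap a (σ a) * σ * (Equiv.swap a (σ a))⁻¹ = σ := by
  ext x
  simp only [Equiv.Perm.mul_apply, Equiv.swap_inv]
  by_cases hx1 : x = a
  · subst hx1
    rw [Equiv.swap_apply_left, h2, Equiv.swap_apply_left]
  by_cases hx2 : x = σ a
  · subst hx2
    rw [Equiv.swap_apply_right, h2, Equiv.swap_apply_right]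
  · rw [Equiv.swap_apply_of_ne_of_ne hx1 hx2]
    rw [Equiv.swap_apply_of_ne_of_ne]
    · intro hc
      apply hx2
      rw [← hc, h2]
    · intro hc
      exact hx1 (by rw [← h2 x, hc, h2])

/-- Sign computation: an odd fixed-point-free involution forces `n % 4 = 2`. -/
lemma aux_nmod4 {n : ℕ} (π : Equiv.Perm (Fin n)) (hs : Equiv.Perm.sign π = -1)
    (h2 : π * π = 1) (hf : ∀ x, π x ≠ x) : n % 4 = 2 := by
  have hπ1 : π ≠ 1 := by
    rintro rfl
    rw [map_one] at hs
    exact absurd hs (by decide)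
  haveI : Fact (Nat.Prime 2) := ⟨Nat.prime_two⟩
  have hord : orderOf π = 2 := orderOf_eq_prime (by rw [pow_two]; exact h2) hπ1
  have hall : ∀ m ∈ π.cycleType, m = 2 := by
    intro m hm
    have h2m : 2 ≤ m := Equiv.Perm.two_le_of_mem_cycleType hm
    have hdvd : m ∣ 2 := by
      rw [← hord, ← Equiv.Perm.lcm_cycleType]
      exact Multiset.dvd_lcm hm
    have := Nat.le_of_dvd (by norm_num) hdvd
    omega
  have hsum : π.cycleType.sum = n := by
    rw [Equiv.Perm.sum_cycleType]
    have : π.support = Finset.univ :=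
      Finset.eq_univ_iff_forall.mpr (fun x => Equiv.Perm.mem_support.mpr (hf x))
    rw [this, Finset.card_univ, Fintype.card_fin]
  have hrep := Multiset.eq_replicate_card.mpr hall
  have h2c : π.cycleType.sum = Multiset.card π.cycleType * 2 := by
    conv_lhs => rw [hrep]
    rw [Multiset.sum_replicate, smul_eq_mul]
  have hn2 : n = 2 * Multiset.card π.cycleType := by omega
  have hsign := Equiv.Perm.sign_of_cycleType π
  rw [hs, hsum] at hsign
  have hodd : Odd (n + Multiset.card π.cycleType) := by
    by_contra he
    rw [Nat.not_odd_iff_even] at he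
    rw [he.neg_one_pow] at hsign
    exact absurd hsign (by decide)
  obtain ⟨j, hj⟩ := hodd
  omega

end AuxLemmas

/-- The conjugation action of a group `G` on a subset `C ⊆ G` (closed under
conjugation) is *primitive*: it is transitive, and every equivalence relation on `C`
that is invariant under conjugation by elements of `G` is either the equality
relation or the full relation. -/
def IsPrimitiveConjAction {G : Type*} [Group G] (C : Set G) : Prop :=
  (∀ x ∈ C, ∀ y ∈ C, ∃ g : G, g * x * g⁻¹ = y) ∧
  ∀ r : G → G → Prop,
    (∀ x ∈ C, r x x) →
    (∀ x ∈ C, ∀ y ∈ C, r x y → r y x) →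
    (∀ x ∈ C, ∀ y ∈ C, ∀ z ∈ C, r x y → r y z → r x z) →
    (∀ g : G, ∀ x ∈ C, ∀ y ∈ C, r x y → r (g * x * g⁻¹) (g * y * g⁻¹)) →
    (∀ x ∈ C, ∀ y ∈ C, (r x y ↔ x = y)) ∨ (∀ x ∈ C, ∀ y ∈ C, r x y)

/-- For `n ≥ 5` and an odd permutation `π ∈ S_n`, the conjugation action of `S_n` on
the conjugacy class of `π` is primitive if and only if `π` is a transposition, or
`n ≡ 2 (mod 4)` and `π` is a fixed-point-free involution. -/
theorem primitive_symm_iff (n : ℕ) (hn : 5 ≤ n) (π : Equiv.Perm (Fin n))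
    (hπ : Equiv.Perm.sign π = -1) :
    IsPrimitiveConjAction {σ : Equiv.Perm (Fin n) | IsConj π σ} ↔
      (π.IsSwap ∨ (n % 4 = 2 ∧ π ^ 2 = 1 ∧ ∀ x : Fin n, π x ≠ x)) := by
  classical
  constructor
  · -- Forward direction: primitivity forces the stated shapes.
    rintro ⟨-, hprim⟩
    have hπ1 : π ≠ 1 := by
      rintro rfl
      rw [map_one] at hπ
      exact absurd hπ (by decide)
    obtain ⟨a, ha⟩ : ∃ a, π a ≠ a := by
      by_contra hc
      push_neg at hc
      exact hπ1 (Equiv.ext hc)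
    have hab : a ≠ π a := fun h => ha h.symm
    -- Step 1: π is an involution.
    have hπ2 : π * π = 1 := by
      by_contra hsq
      obtain ⟨c, hc⟩ : ∃ c, c ∉ ({a, π a, π⁻¹ a} : Finset (Fin n)) := by
        apply aux_exists_notin
        have h3 : ({a, π a, π⁻¹ a} : Finset (Fin n)).card ≤ 3 := by
          apply le_trans (Finset.card_insert_le _ _)
          have := Finset.card_insert_le (π a) ({π⁻¹ a} : Finset (Fin n))
          simp only [Finset.card_singleton] at this
          omega
        omega
      simp only [Finset.mem_insert, Finset.mem_singleton, not_or] at hc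
      obtain ⟨hca, hcb, hcinv⟩ := hc
      have hτmem : IsConj π (Equiv.swap (π a) c * π * (Equiv.swap (π a) c)⁻¹) :=
        isConj_iff.mpr ⟨_, rfl⟩
      have hτa : (Equiv.swap (π a) c * π * (Equiv.swap (π a) c)⁻¹) a = c := by
        simp only [Equiv.Perm.mul_apply, Equiv.swap_inv]
        rw [Equiv.swap_apply_of_ne_of_ne hab (Ne.symm hca), Equiv.swap_apply_left]
      rcases hprim (fun x y => y = x ∨ y = x⁻¹)
        (fun x _ => Or.inl rfl)
        (by
          rintro x _ y _ (h | h)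
          · exact Or.inl h.symm
          · exact Or.inr (by rw [h, inv_inv]))
        (by
          rintro x _ y _ z _ (h1 | h1) (h2 | h2)
          · exact Or.inl (h2.trans h1)
          · right; rw [h2, h1]
          · exact Or.inr (h2.trans h1)
          · left; rw [h2, h1, inv_inv])
        (by
          rintro g x _ y _ (h | h)
          · exact Or.inl (by rw [h])
          · refine Or.inr ?_
            rw [h]
            simp [mul_inv_rev, mul_assoc]) with heq | hfull
      · have h1 : IsConj π π⁻¹ :=
          Equiv.Perm.isConj_iff_cycleType_eq.mpr (Equiv.Perm.cycleType_inv π).symm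
        have h2 := (heq π (IsConj.refl π) π⁻¹ h1).mp (Or.inr rfl)
        exact hsq (mul_eq_one_iff_eq_inv.mpr h2)
      · rcases hfull π (IsConj.refl π) _ hτmem with h | h
        · exact hcb (by rw [← hτa, h])
        · exact hcinv (by rw [← hτa, h])
    have hπ2' : ∀ x, π (π x) = x := by
      intro x
      have := congrArg (fun f : Equiv.Perm (Fin n) => f x) hπ2
      simpa using this
    have hπb : π (π a) = a := hπ2' a
    by_cases hfix : ∃ f, π f = f
    · -- π has a fixed point; show it must be a transposition.
      obtain ⟨f0, hf0⟩ := hfix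
      left
      by_contra hsw
      obtain ⟨c, hcab, hc⟩ : ∃ c, (c ≠ a ∧ c ≠ π a) ∧ π c ≠ c := by
        by_contra hcon
        push_neg at hcon
        apply hsw
        refine ⟨a, π a, hab, ?_⟩
        refine Equiv.ext fun x => ?_
        by_cases hx1 : x = a
        · rw [hx1, Equiv.swap_apply_left]
        by_cases hx2 : x = π a
        · rw [hx2, Equiv.swap_apply_right, hπb]
        · rw [Equiv.swap_apply_of_ne_of_ne hx1 hx2]
          exact hcon x ⟨hx1, hx2⟩
      have hdc : π c ≠ c := hc
      have hdb : π c ≠ π a := fun h => hcab.1 (π.injective h)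
      have hda : π c ≠ a := by
        intro h
        apply hcab.2
        rw [← hπ2' c, h]
      have hf0a : f0 ≠ a := fun h => ha (by rw [← h, hf0])
      -- the invariant relation "same fixed points"
      have keyiff : ∀ (g : Equiv.Perm (Fin n)) (u : Equiv.Perm (Fin n)) (z : Fin n),
          (g * u * g⁻¹) z = z ↔ u (g⁻¹ z) = g⁻¹ z := by
        intro g u z
        simp only [Equiv.Perm.mul_apply]
        constructor
        · intro h
          exact g.injective (by rw [h, show g (g⁻¹ z) = z from g.apply_symm_apply z])
        · intro h
          rw [h, show g (g⁻¹ z) = z from g.apply_symm_apply z]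
      rcases hprim (fun u v => ∀ x, u x = x ↔ v x = x)
        (fun x _ _ => Iff.rfl)
        (fun x _ y _ h z => (h z).symm)
        (fun x _ y _ z _ h1 h2 w => (h1 w).trans (h2 w))
        (by
          intro g x _ y _ h z
          rw [keyiff g x z, keyiff g y z]
          exact h (g⁻¹ z)) with heq | hfull
      · -- conjugate by swap (π a) c : same fixed points but different permutation
        have hτmem : IsConj π (Equiv.swap (π a) c * π * (Equiv.swap (π a) c)⁻¹) :=
          isConj_iff.mpr ⟨_, rfl⟩
        have hτap : ∀ x, (Equiv.swap (π a) c * π * (Equiv.swap (π a) c)⁻¹) x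
            = Equiv.swap (π a) c (π (Equiv.swap (π a) c x)) := by
          intro x
          simp only [Equiv.Perm.mul_apply, Equiv.swap_inv]
        have hrπτ : ∀ x, π x = x ↔ (Equiv.swap (π a) c * π * (Equiv.swap (π a) c)⁻¹) x = x := by
          intro x
          rw [hτap]
          by_cases hxb : x = π a
          · subst hxb
            rw [Equiv.swap_apply_left, hπb]
            exact iff_of_false (fun h => ha h.symm)
              (fun h => hdb (by rwa [Equiv.swap_apply_of_ne_of_ne hdb hdc] at h))
          by_cases hxc : x = c
          · subst hxc
            rw [Equiv.swap_apply_right, hπb]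
            exact iff_of_false hc (fun h => (Ne.symm hcab.1) (by
              rwa [Equiv.swap_apply_of_ne_of_ne hab (Ne.symm hcab.1)] at h))
          · rw [Equiv.swap_apply_of_ne_of_ne hxb hxc]
            constructor
            · intro h
              rw [h, Equiv.swap_apply_of_ne_of_ne hxb hxc]
            · intro h
              have h2 := congrArg (Equiv.swap (π a) c) h
              rw [Equiv.swap_apply_self, Equiv.swap_apply_of_ne_of_ne hxb hxc] at h2
              exact h2
        have heqπ := (heq π (IsConj.refl π) _ hτmem).mp hrπτ
        have := congrArg (fun f : Equiv.Perm (Fin n) => f a) heqπ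
        simp only [hτap] at this
        rw [Equiv.swap_apply_of_ne_of_ne hab (Ne.symm hcab.1), Equiv.swap_apply_left] at this
        exact hcab.2 this.symm
      · -- conjugate by swap a f0 : moves fixed point, contradiction with fullness
        have hτmem : IsConj π (Equiv.swap a f0 * π * (Equiv.swap a f0)⁻¹) :=
          isConj_iff.mpr ⟨_, rfl⟩
        have h := hfull π (IsConj.refl π) _ hτmem a
        apply ha
        apply h.mpr
        simp only [Equiv.Perm.mul_apply, Equiv.swap_inv]
        rw [Equiv.swap_apply_left, hf0, Equiv.swap_apply_right]
    · -- π is a fixed-point-free involution: n % 4 = 2 by the sign computation.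
      push_neg at hfix
      right
      exact ⟨aux_nmod4 π hπ hπ2 hfix, by rw [pow_two]; exact hπ2, hfix⟩
  · -- Backward direction.
    intro hcase
    constructor
    · intro x hx y hy
      exact isConj_iff.mp ((hx : IsConj π x).symm.trans (hy : IsConj π y))
    · intro r hrefl hsymm htrans hinv
      by_cases htriv : ∀ x ∈ {σ : Equiv.Perm (Fin n) | IsConj π σ},
          ∀ y ∈ {σ : Equiv.Perm (Fin n) | IsConj π σ}, r x y → x = y
      · left
        intro x hx y hy
        exact ⟨htriv x hx y hy, fun h => h ▸ hrefl x hx⟩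
      right
      push_neg at htriv
      obtain ⟨σ, hσ, τ, hτ, hrστ, hστ⟩ := htriv
      rcases hcase with hswap | ⟨-, hpow, hfpf⟩
      · -- Case A: π is a transposition.
        obtain ⟨a0, b0, hab0, hπsw⟩ := hswap
        have memC : ∀ x y : Fin n, x ≠ y → IsConj π (Equiv.swap x y) := by
          intro x y hxy
          obtain ⟨g, hg1, hg2⟩ := aux_exists_perm_two hab0 hxy
          refine isConj_iff.mpr ⟨g, ?_⟩
          rw [hπsw, ← hg1, ← hg2]
          exact (Equiv.swap_apply_apply g a0 b0).symm
        have memD : ∀ s : Equiv.Perm (Fin n), IsConj π s →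
            ∃ x y, x ≠ y ∧ s = Equiv.swap x y := by
          intro s hs
          obtain ⟨g, hg⟩ := isConj_iff.mp hs
          refine ⟨g a0, g b0, g.injective.ne hab0, ?_⟩
          rw [← hg, hπsw, Equiv.swap_apply_apply]
        obtain ⟨a, b, hab, hσeq⟩ := memD σ hσ
        obtain ⟨c, d, hcd, hτeq⟩ := memD τ hτ
        subst hσeq
        subst hτeq
        -- Step 1: get an instance of r on two transpositions sharing a point.
        have base : ∃ p q s2 : Fin n, p ≠ q ∧ p ≠ s2 ∧ q ≠ s2 ∧
            r (Equiv.swap p q) (Equiv.swap p s2) := by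
          by_cases h1 : a = c
          · subst h1
            have hbd : b ≠ d := fun h => hστ (by rw [h])
            exact ⟨a, b, d, hab, hcd, hbd, hrστ⟩
          by_cases h2 : a = d
          · subst h2
            have hbc : b ≠ c := fun h => hστ (by rw [h, Equiv.swap_comm])
            refine ⟨a, b, c, hab, Ne.symm hcd, hbc, ?_⟩
            rw [Equiv.swap_comm a c]
            exact hrστ
          by_cases h3 : b = c
          · subst h3
            have had : a ≠ d := fun h => hστ (by rw [h, Equiv.swap_comm])
            refine ⟨b, a, d, Ne.symm hab, hcd, had, ?_⟩
            rw [Equiv.swap_comm b a]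
            exact hrστ
          by_cases h4 : b = d
          · subst h4
            have hac : a ≠ c := fun h => hστ (by rw [h])
            refine ⟨b, a, c, Ne.symm hab, Ne.symm hcd, hac, ?_⟩
            rw [Equiv.swap_comm b a, Equiv.swap_comm b c]
            exact hrστ
          · obtain ⟨e, he⟩ := aux_exists_notin {a, b, c, d} (by
              have h5 : ({a, b, c, d} : Finset (Fin n)).card ≤ 4 := by
                apply le_trans (Finset.card_insert_le _ _)
                have h6 : ({b, c, d} : Finset (Fin n)).card ≤ 3 := by
                  apply le_trans (Finset.card_insert_le _ _)
                  have := Finset.card_insert_le c ({d} : Finset (Fin n))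
                  simp only [Finset.card_singleton] at this
                  omega
                omega
              omega)
            simp only [Finset.mem_insert, Finset.mem_singleton, not_or] at he
            obtain ⟨hea, heb, hec, hed⟩ := he
            have hge := hinv (Equiv.swap d e) _ hσ _ hτ hrστ
            have c1 : Equiv.swap d e * Equiv.swap a b * (Equiv.swap d e)⁻¹
                = Equiv.swap a b := by
              rw [← Equiv.swap_apply_apply,
                Equiv.swap_apply_of_ne_of_ne h2 (Ne.symm hea),
                Equiv.swap_apply_of_ne_of_ne h4 (Ne.symm heb)]
            have c2 : Equiv.swap d e * Equiv.swap c d * (Equiv.swap d e)⁻¹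
                = Equiv.swap c e := by
              rw [← Equiv.swap_apply_apply,
                Equiv.swap_apply_of_ne_of_ne hcd (Ne.symm hec),
                Equiv.swap_apply_left]
            rw [c1, c2] at hge
            have h5 : r (Equiv.swap c d) (Equiv.swap c e) :=
              htrans _ (memC c d hcd) _ (memC a b hab) _ (memC c e (Ne.symm hec))
                (hsymm _ (memC a b hab) _ (memC c d hcd) hrστ) hge
            exact ⟨c, d, e, hcd, Ne.symm hec, Ne.symm hed, h5⟩
        obtain ⟨p, q, s2, hpq, hps, hqs, hbase⟩ := base
        -- Step 2: transport to all pairs of transpositions sharing a point.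
        have K : ∀ x y z : Fin n, x ≠ y → x ≠ z → y ≠ z →
            r (Equiv.swap x y) (Equiv.swap x z) := by
          intro x y z hxy hxz hyz
          obtain ⟨g, hg1, hg2, hg3⟩ := aux_exists_perm_three hpq hps hqs hxy hxz hyz
          have hge := hinv g _ (memC p q hpq) _ (memC p s2 hps) hbase
          have c1 : g * Equiv.swap p q * g⁻¹ = Equiv.swap x y := by
            rw [← Equiv.swap_apply_apply, hg1, hg2]
          have c2 : g * Equiv.swap p s2 * g⁻¹ = Equiv.swap x z := by
            rw [← Equiv.swap_apply_apply, hg1, hg3]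
          rwa [c1, c2] at hge
        -- Step 3: fullness.
        intro u hu v hv
        obtain ⟨x, y, hxy, hueq⟩ := memD u hu
        obtain ⟨z, w, hzw, hveq⟩ := memD v hv
        subst hueq
        subst hveq
        by_cases heqs : Equiv.swap x y = Equiv.swap z w
        · rw [heqs]
          exact hrefl _ hv
        by_cases hxz : x = z
        · subst hxz
          have hyw : y ≠ w := fun h => heqs (by rw [h])
          exact K x y w hxy hzw hyw
        by_cases hxw : x = w
        · subst hxw
          have hyz : y ≠ z := fun h => heqs (by rw [h, Equiv.swap_comm])
          rw [Equiv.swap_comm z x]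
          exact K x y z hxy hxz hyz
        by_cases hyz : y = z
        · subst hyz
          rw [Equiv.swap_comm x y]
          exact K y x w (Ne.symm hxy) hzw hxw
        by_cases hyw : y = w
        · subst hyw
          rw [Equiv.swap_comm x y, Equiv.swap_comm z y]
          exact K y x z (Ne.symm hxy) hyz hxz
        · have h1 := K x y z hxy hxz hyz
          have h2 := K z x w (fun h => hxz h.symm) hzw hxw
          have h2' : r (Equiv.swap x z) (Equiv.swap z w) := by
            rwa [Equiv.swap_comm z x] at h2
          exact htrans _ (memC x y hxy) _ (memC x z hxz) _ (memC z w hzw) h1 h2'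
      · -- Case B: π is a fixed-point-free involution.
        have hππ : π * π = 1 := by rw [← pow_two]; exact hpow
        have hπ2' : ∀ x, π (π x) = x := by
          intro x
          have := congrArg (fun f : Equiv.Perm (Fin n) => f x) hππ
          simpa using this
        have hCprop : ∀ s : Equiv.Perm (Fin n), IsConj π s →
            (∀ x, s (s x) = x) ∧ (∀ x, s x ≠ x) := by
          intro s hs
          obtain ⟨g, hg⟩ := isConj_iff.mp hs
          subst hg
          constructor
          · intro x
            simp only [Equiv.Perm.mul_apply, Equiv.Perm.inv_def, Equiv.symm_apply_apply, hπ2',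
              Equiv.apply_symm_apply]
          · intro x h
            simp only [Equiv.Perm.mul_apply] at h
            apply hfpf (g⁻¹ x)
            exact g.injective (by rw [h, show g (g⁻¹ x) = x from g.apply_symm_apply x])
        obtain ⟨hσ2, hσf⟩ := hCprop σ hσ
        obtain ⟨hτ2, hτf⟩ := hCprop τ hτ
        obtain ⟨a1, ha1⟩ : ∃ x, σ x ≠ τ x := by
          by_contra hcon
          push_neg at hcon
          exact hστ (Equiv.ext hcon)
        have hN'mem : IsConj π (Equiv.swap a1 (σ a1) * τ * (Equiv.swap a1 (σ a1))⁻¹) :=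
          hτ.trans (isConj_iff.mpr ⟨_, rfl⟩)
        have h1 : r σ (Equiv.swap a1 (σ a1) * τ * (Equiv.swap a1 (σ a1))⁻¹) := by
          have := hinv (Equiv.swap a1 (σ a1)) σ hσ τ hτ hrστ
          rwa [aux_swap_edge σ hσ2 a1] at this
        have h2 : r τ (Equiv.swap a1 (σ a1) * τ * (Equiv.swap a1 (σ a1))⁻¹) :=
          htrans τ hτ σ hσ _ hN'mem (hsymm σ hσ τ hτ hrστ) h1
        -- the quadrilateral move
        have quad : ∀ P : Equiv.Perm (Fin n), IsConj π P → ∀ u v : Fin n, u ≠ v → P u ≠ v →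
            r P (Equiv.swap u v * P * (Equiv.swap u v)⁻¹) := by
          intro P hP u v huv hPuv
          obtain ⟨hP2, hPf⟩ := hCprop P hP
          obtain ⟨g2, hg2e, hg2a, hg2b⟩ := aux_conj hτ2 hτf hP2 hPf
            (hσf a1) ha1 (Ne.symm huv) (fun h => hPuv h.symm)
          have hg2P : g2 * τ * g2⁻¹ = P := by
            ext x
            simp only [Equiv.Perm.mul_apply]
            rw [hg2e, show g2 (g2⁻¹ x) = x from g2.apply_symm_apply x]
          have hswap : g2 * Equiv.swap a1 (σ a1) * g2⁻¹ = Equiv.swap u v := by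
            rw [← Equiv.swap_apply_apply, hg2a, hg2b]
          have hr := hinv g2 τ hτ _ hN'mem h2
          have hX : g2 * (Equiv.swap a1 (σ a1) * τ * (Equiv.swap a1 (σ a1))⁻¹) * g2⁻¹
              = Equiv.swap u v * P * (Equiv.swap u v)⁻¹ := by
            rw [← hg2P, ← hswap]
            group
          rwa [hg2P, hX] at hr
        -- Step 3: chain of quadrilateral moves connects everything.
        have chain : ∀ m : ℕ, ∀ P : Equiv.Perm (Fin n), IsConj π P →
            ∀ Q : Equiv.Perm (Fin n), IsConj π Q →
            (Finset.filter (fun x => P x ≠ Q x) Finset.univ).card ≤ m → r P Q := by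
          intro m
          induction m with
          | zero =>
            intro P hP Q hQ hcard
            have h0 : ∀ x, P x = Q x := by
              intro x
              by_contra hx
              have hmem : x ∈ Finset.filter (fun x => P x ≠ Q x) Finset.univ := by
                simp only [Finset.mem_filter, Finset.mem_univ, true_and]
                exact hx
              have := Finset.card_eq_zero.mp (Nat.le_zero.mp hcard)
              rw [this] at hmem
              exact Finset.notMem_empty x hmem
            have : P = Q := Equiv.ext h0
            rw [this]
            exact hrefl Q hQ
          | succ m ih =>
            intro P hP Q hQ hcard
            by_cases hPQ : P = Q
            · rw [hPQ]; exact hrefl Q hQ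
            obtain ⟨a2, ha2⟩ : ∃ x, P x ≠ Q x := by
              by_contra hcon
              push_neg at hcon
              exact hPQ (Equiv.ext hcon)
            obtain ⟨hP2, hPf⟩ := hCprop P hP
            obtain ⟨hQ2, hQf⟩ := hCprop Q hQ
            have hub : P a2 ≠ Q a2 := ha2
            have hPu : P (P a2) ≠ Q a2 := by
              rw [hP2]
              exact fun h => hQf a2 h.symm
            have hP1mem : IsConj π (Equiv.swap (P a2) (Q a2) * P * (Equiv.swap (P a2) (Q a2))⁻¹) :=
              hP.trans (isConj_iff.mpr ⟨_, rfl⟩)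
            have hq := quad P hP (P a2) (Q a2) hub hPu
            have hP1x : ∀ x, (Equiv.swap (P a2) (Q a2) * P * (Equiv.swap (P a2) (Q a2))⁻¹) x
                = Equiv.swap (P a2) (Q a2) (P (Equiv.swap (P a2) (Q a2) x)) := by
              intro x
              simp only [Equiv.Perm.mul_apply, Equiv.swap_inv]
            have hP1a2 : (Equiv.swap (P a2) (Q a2) * P * (Equiv.swap (P a2) (Q a2))⁻¹) a2
                = Q a2 := by
              rw [hP1x, Equiv.swap_apply_of_ne_of_ne (Ne.symm (hPf a2)) (Ne.symm (hQf a2)),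
                Equiv.swap_apply_left]
            have hsub : Finset.filter
                (fun x => (Equiv.swap (P a2) (Q a2) * P * (Equiv.swap (P a2) (Q a2))⁻¹) x ≠ Q x)
                Finset.univ ⊆
                (Finset.filter (fun x => P x ≠ Q x) Finset.univ).erase a2 := by
              intro x hx
              simp only [Finset.mem_filter, Finset.mem_univ, true_and] at hx
              rw [Finset.mem_erase]
              constructor
              · rintro rfl
                exact hx (by rw [hP1a2])
              · simp only [Finset.mem_filter, Finset.mem_univ, true_and]
                intro hPx
                apply hx
                have hxu : x ≠ P a2 := by
                  intro h
                  have h1 : Q (P a2) = a2 := by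
                    rw [← h, ← hPx, h, hP2]
                  have h2 : Q (Q a2) = a2 := hQ2 a2
                  exact hub (Q.injective (h1.trans h2.symm))
                have hxb : x ≠ Q a2 := by
                  intro h
                  have h1 : P (Q a2) = a2 := by
                    rw [← h, hPx, h, hQ2]
                  have h2 := congrArg P h1
                  rw [hP2] at h2
                  exact hub h2.symm
                have hPxu : P x ≠ P a2 := by
                  intro h
                  have := P.injective h
                  rw [this] at hPx
                  exact hub hPx
                have hPxb : P x ≠ Q a2 := by
                  intro h
                  have h1 : Q x = Q a2 := by rw [← hPx]; exact h
                  have := Q.injective h1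
                  rw [this] at hPx
                  exact hub hPx
                rw [hP1x, Equiv.swap_apply_of_ne_of_ne hxu hxb,
                  Equiv.swap_apply_of_ne_of_ne hPxu hPxb]
                exact hPx
            have ha2mem : a2 ∈ Finset.filter (fun x => P x ≠ Q x) Finset.univ := by
              simp only [Finset.mem_filter, Finset.mem_univ, true_and]
              exact ha2
            have hlt : (Finset.filter
                (fun x => (Equiv.swap (P a2) (Q a2) * P * (Equiv.swap (P a2) (Q a2))⁻¹) x ≠ Q x)
                Finset.univ).card ≤ m := by
              have hle := Finset.card_le_card hsub
              rw [Finset.card_erase_of_mem ha2mem] at hle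
              omega
            exact htrans P hP _ hP1mem Q hQ hq (ih _ hP1mem Q hQ hlt)
        intro x hx y hy
        refine chain n x hx y hy ?_
        calc (Finset.filter (fun z => x z ≠ y z) Finset.univ).card
            ≤ Finset.univ.card := Finset.card_filter_le _ _
          _ = n := by simp
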